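/- Let F : ℝⁿ → ℝ satisfy F(x) ≥ F* for all x ∈ ℝⁿ, and let θ > 0 and λ̲ > 0. Suppose sequences x^i ∈ ℝⁿ, λ_i ≥ λ̲, G_i ∈ ℝⁿ, and δ_i ≥ 0 (i = 0, 1, 2, …) satisfy F(x^{i+1}) − F(x^i) ≤ −(θ λ_i / 2)‖G_i‖² + δ_i for all i, and that S = Σ_{i=0}^∞ δ_i < ∞. Then for every N ≥ 1, Σ_{i=0}^{N−1} ‖G_i‖² ≤ 2(F(x⁰) − F* + S)/(θ λ̲). -/

import Mathlib

/-- summing the controlled descent inequality yields a bound on the sum of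
squared gradient-mapping norms. -/
theorem stmt8 {n : ℕ}
    (F : EuclideanSpace ℝ (Fin n) → ℝ) (Fstar : ℝ)
    (hF : ∀ y, Fstar ≤ F y)
    (θ lamLow : ℝ) (hθ : 0 < θ) (hlamLow : 0 < lamLow)
    (x : ℕ → EuclideanSpace ℝ (Fin n))
    (lam : ℕ → ℝ) (hlam : ∀ i, lamLow ≤ lam i)
    (G : ℕ → EuclideanSpace ℝ (Fin n))
    (δ : ℕ → ℝ) (hδ : ∀ i, 0 ≤ δ i)
    (hdesc : ∀ i, F (x (i + 1)) - F (x i) ≤ -(θ * lam i / 2) * ‖G i‖ ^ 2 + δ i)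
    (hsum : Summable δ) :
    ∀ N : ℕ, 1 ≤ N →
      ∑ i ∈ Finset.range N, ‖G i‖ ^ 2
        ≤ 2 * (F (x 0) - Fstar + ∑' i, δ i) / (θ * lamLow) := by
  intro N _
  have hpos : 0 < θ * lamLow := mul_pos hθ hlamLow
  have key : (θ * lamLow / 2) * ∑ i ∈ Finset.range N, ‖G i‖ ^ 2
      ≤ F (x 0) - Fstar + ∑' i, δ i := by
    have h1 : ∀ i, (θ * lamLow / 2) * ‖G i‖ ^ 2
        ≤ F (x i) - F (x (i + 1)) + δ i := by
      intro i
      have := hdesc i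
      have hmul : (θ * lamLow / 2) * ‖G i‖ ^ 2 ≤ (θ * lam i / 2) * ‖G i‖ ^ 2 := by
        apply mul_le_mul_of_nonneg_right _ (sq_nonneg _)
        have := hlam i
        nlinarith
      nlinarith
    calc (θ * lamLow / 2) * ∑ i ∈ Finset.range N, ‖G i‖ ^ 2
        = ∑ i ∈ Finset.range N, (θ * lamLow / 2) * ‖G i‖ ^ 2 := Finset.mul_sum _ _ _
      _ ≤ ∑ i ∈ Finset.range N, (F (x i) - F (x (i + 1)) + δ i) :=
          Finset.sum_le_sum fun i _ => h1 i
      _ = (F (x 0) - F (x N)) + ∑ i ∈ Finset.range N, δ i := by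
          rw [Finset.sum_add_distrib, Finset.sum_range_sub' (fun i => F (x i))]
      _ ≤ F (x 0) - Fstar + ∑' i, δ i := by
          gcongr
          · exact hF _
          · exact Summable.sum_le_tsum _ (fun i _ => hδ i) hsum -- range-sum ≤ tsum
  rw [le_div_iff₀ hpos]
  nlinarith [key]
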